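/- Let n ≥ 1, let A₀, A₁ ∈ Mₙ(ℂ), let σ ∈ ℂ with σ ≠ 0, and let λ₊, λ₋ ∈ ℂ with λ₊ ≠ λ₋. If the matrix pencil D(λ) := A₀ + λA₁ satisfies D(λ)² = σ(λ−λ₊)(λ−λ₋)·I for all λ ∈ ℂ, then n is even. -/

import Mathlib

open Matrix

/-- If the pencil `D(λ) = A₀ + λ•A₁` satisfies
`D(λ)² = σ(λ−λ₊)(λ−λ₋)·I` for all `λ` (with `σ ≠ 0`, `λ₊ ≠ λ₋`), then `n` is even. -/
theorem stmt1 {n : ℕ} (hn : 1 ≤ n) (A₀ A₁ : Matrix (Fin n) (Fin n) ℂ)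
    (σ : ℂ) (hσ : σ ≠ 0) (lp lm : ℂ) (hl : lp ≠ lm)
    (hD : ∀ z : ℂ, (A₀ + z • A₁) ^ 2
      = (σ * (z - lp) * (z - lm)) • (1 : Matrix (Fin n) (Fin n) ℂ)) :
    Even n := by
  set M : Matrix (Fin n) (Fin n) ℂ := A₀ + lp • A₁ with hMdef
  set N : Matrix (Fin n) (Fin n) ℂ := A₀ + lm • A₁ with hNdef
  have hM : M * M = 0 := by
    have := hD lp
    rw [pow_two] at this
    simpa using this
  have hN : N * N = 0 := by
    have := hD lm
    rw [pow_two] at this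
    simpa using this
  set μ : ℂ := -σ * (lp - lm) ^ 2 with hμdef
  have hμ : μ ≠ 0 := by
    simp only [hμdef, neg_mul, neg_ne_zero]
    exact mul_ne_zero hσ (pow_ne_zero 2 (sub_ne_zero.mpr hl))
  -- midpoint evaluation gives the anticommutator
  have hmid : A₀ + ((lp + lm) / 2) • A₁ = (2⁻¹ : ℂ) • (M + N) := by
    rw [hMdef, hNdef]
    module
  have hexp : (M + N) * (M + N) = M * N + N * M := by
    rw [add_mul, mul_add M M N, mul_add N M N, hM, hN, zero_add, add_zero]
  have key : M * N + N * M = μ • (1 : Matrix (Fin n) (Fin n) ℂ) := by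
    have h0 := hD ((lp + lm) / 2)
    rw [hmid, smul_pow, pow_two (M + N), hexp] at h0
    have h1 : (M * N + N * M) = ((2⁻¹ : ℂ) ^ 2)⁻¹ • ((σ * ((lp + lm) / 2 - lp) * ((lp + lm) / 2 - lm)) • (1 : Matrix (Fin n) (Fin n) ℂ)) := by
      rw [← h0, smul_smul]
      norm_num
    rw [h1, smul_smul]
    congr 1
    rw [hμdef]
    ring
  set B : Matrix (Fin n) (Fin n) ℂ := N * M with hBdef
  have hBB : B * B = μ • B := by
    have hMN : M * N = μ • (1 : Matrix (Fin n) (Fin n) ℂ) - N * M := by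
      rw [← key]; abel
    calc B * B = N * (M * N) * M := by rw [hBdef]; noncomm_ring
      _ = N * (μ • (1 : Matrix (Fin n) (Fin n) ℂ) - N * M) * M := by rw [hMN]
      _ = μ • (N * M) - (N * N) * (M * M) := by
          rw [mul_sub, sub_mul]; simp [Matrix.mul_smul, Matrix.smul_mul, mul_assoc]
      _ = μ • B := by rw [hM, hN]; simp [hBdef]
  -- trace of B
  have htrB : 2 * Matrix.trace B = μ * n := by
    have h1 : Matrix.trace (M * N) = Matrix.trace B := by
      rw [hBdef, Matrix.trace_mul_comm]
    have h2 := congrArg Matrix.trace key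
    rw [Matrix.trace_add, h1, Matrix.trace_smul, Matrix.trace_one] at h2
    rw [two_mul, h2]
    simp [Finset.card_fin, mul_comm]
  -- the idempotent
  set P : Matrix (Fin n) (Fin n) ℂ := μ⁻¹ • B with hPdef
  have hPP : P * P = P := by
    rw [hPdef, Matrix.smul_mul, Matrix.mul_smul, hBB, smul_smul, smul_smul]
    congr 1
    field_simp
  have htrP : 2 * Matrix.trace P = (n : ℂ) := by
    rw [hPdef, Matrix.trace_smul, smul_eq_mul, ← mul_assoc, mul_comm (2 : ℂ) μ⁻¹, mul_assoc,
      htrB, ← mul_assoc, inv_mul_cancel₀ hμ, one_mul]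
  -- transfer to a linear map and use trace of projection = finrank
  set f : (Fin n → ℂ) →ₗ[ℂ] (Fin n → ℂ) := Matrix.toLin' P with hfdef
  have hff : f ∘ₗ f = f := by
    rw [hfdef, ← Matrix.toLin'_mul, hPP]
  obtain ⟨p, hp⟩ := (LinearMap.isProj_iff_isIdempotentElem f).mpr hff
  have htrf : LinearMap.trace ℂ (Fin n → ℂ) f = Matrix.trace P := by
    rw [LinearMap.trace_eq_matrix_trace ℂ (Pi.basisFun ℂ (Fin n)) f,
      LinearMap.toMatrix_eq_toMatrix', hfdef, LinearMap.toMatrix'_toLin']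
  have hfin := hp.trace
  rw [htrf] at hfin
  have : (n : ℂ) = 2 * (Module.finrank ℂ p : ℂ) := by
    rw [← htrP, hfin]
  have hnat : n = 2 * Module.finrank ℂ p := by
    exact_mod_cast this
  exact ⟨Module.finrank ℂ p, by omega⟩
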